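/- The Grundy sequence h for Minimum Nim with rule f(n) = ⌊(n-1)/2⌋ satisfies h(n) = ⌊log₂ n⌋ + 1 for all n ≥ 1, and h(0) = 0. -/
import Mathlib


open Classical

noncomputable section

/-- The minimal excludant of a set of naturals. -/
def mex (S : Set ℕ) : ℕ := sInf {v | v ∉ S}

/-- A rule sequence is regular if `f 0 = 0`, `f n ≤ n`, and `f` increases by 0 or 1. -/
def Regular (f : ℕ → ℕ) : Prop :=
  f 0 = 0 ∧ (∀ n, f n ≤ n) ∧ ∀ n, f n ≤ f (n + 1) ∧ f (n + 1) ≤ f n + 1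

/-- `g` is the Grundy sequence for Maximum Nim with rule `f`:
`g n = mex { g (n - i) : 1 ≤ i ≤ f n }`. -/
def MaxNimGrundy (f g : ℕ → ℕ) : Prop :=
  ∀ n, g n = mex {v | ∃ i, 1 ≤ i ∧ i ≤ f n ∧ g (n - i) = v}

/-- `h` is the Grundy sequence for Minimum Nim with rule `f`:
`h n = mex { h i : 0 ≤ i ≤ n - f n - 1 }`. -/
def MinNimGrundy (f h : ℕ → ℕ) : Prop :=
  ∀ n, h n = mex {v | ∃ i, i + f n + 1 ≤ n ∧ h i = v}

/-- Every natural number occurs infinitely often. -/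
def Infinitive (g : ℕ → ℕ) : Prop := ∀ k, {n | g n = k}.Infinite

/-- The position of the first occurrence of `k` in `g`. -/
def firstOcc (g : ℕ → ℕ) (k : ℕ) : ℕ := sInf {n | g n = k}

/-- `n` is not the first occurrence of its value in `g`. -/
def NotFirst (g : ℕ → ℕ) (n : ℕ) : Prop := ∃ m < n, g m = g n

/-- The subsequence of `g` obtained by deleting the first occurrence of each value. -/
def Lam (g : ℕ → ℕ) : ℕ → ℕ := fun m => g (Nat.nth (NotFirst g) m)

/-- Kimberling's fractal sequences: infinitive, first occurrences in increasing
order of value (F2), and deleting first occurrences leaves the sequence unchanged (F3). -/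
def Fractal (g : ℕ → ℕ) : Prop :=
  Infinitive g ∧
  (∀ j k, j < k → firstOcc g j < firstOcc g k) ∧
  (∀ m, Lam g m = g m)

/-- The restriction `g|M`: the subsequence of terms of `g` lying in `M`. -/
def restrictSeq (g : ℕ → ℕ) (M : Set ℕ) : ℕ → ℕ :=
  fun m => g (Nat.nth (fun n => g n ∈ M) m)

/-- An interspersion: an infinitive sequence such that for `i < j` the restriction
`g|{i,j}` is an initial block of `i`'s followed by strict alternation `j, i, j, i, ...`. -/
def Interspersion (g : ℕ → ℕ) : Prop :=
  Infinitive g ∧ ∀ i j, i < j → ∃ N,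
    (∀ n < N, restrictSeq g {i, j} n = i) ∧
    ∀ n, restrictSeq g {i, j} (N + 2 * n) = j ∧
         restrictSeq g {i, j} (N + 2 * n + 1) = i

/-- `striangle g i j`: the number of occurrences of `i` strictly before the first
occurrence of `j`, not counting the occurrence `g 0 = 0` when `i = 0`. -/
def striangle (g : ℕ → ℕ) (i j : ℕ) : ℕ :=
  Set.ncard {n | g n = i ∧ n < firstOcc g j ∧ (i = 0 → n ≠ 0)}

/-- A subadditive triangle: `s i j + s j k - 1 ≤ s i k ≤ s i j + s j k` for `i < j < k`. -/
def SubadditiveTriangle (s : ℕ → ℕ → ℕ) : Prop :=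
  ∀ i j k, i < j → j < k →
    s i j + s j k ≤ s i k + 1 ∧ s i k ≤ s i j + s j k

/-- the Minimum Nim Grundy sequence with rule `f n = ⌊(n-1)/2⌋` is
`h n = ⌊log₂ n⌋ + 1` for `n ≥ 1`, and `h 0 = 0`. -/
lemma mex_Iio (m : ℕ) : mex (Set.Iio m) = m := by
  unfold mex
  have : {v : ℕ | v ∉ Set.Iio m} = Set.Ici m := by
    ext v; simp [Set.mem_Iio, not_lt]
  rw [this, csInf_Ici]

theorem minNim_half_rule_formula (f h : ℕ → ℕ) (hf : ∀ n, f n = (n - 1) / 2)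
    (hh : MinNimGrundy f h) :
    h 0 = 0 ∧ ∀ n, 1 ≤ n → h n = Nat.log 2 n + 1 := by
  have h0 : h 0 = 0 := by
    have := hh 0
    have hempty : {v : ℕ | ∃ i, i + f 0 + 1 ≤ 0 ∧ h i = v} = (∅ : Set ℕ) := by
      ext v; simp
    rw [hempty] at this
    simpa [mex, Set.mem_setOf_eq] using this
  refine ⟨h0, ?_⟩
  intro n hn
  induction n using Nat.strong_induction_on with
  | _ n IH =>
  have key : {v : ℕ | ∃ i, i + f n + 1 ≤ n ∧ h i = v} = Set.Iio (Nat.log 2 n + 1) := by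
    ext v
    simp only [Set.mem_setOf_eq, Set.mem_Iio]
    constructor
    · rintro ⟨i, hile, rfl⟩
      have hi2 : i ≤ n / 2 := by rw [hf] at hile; omega
      rcases Nat.eq_zero_or_pos i with rfl | hipos
      · rw [h0]; omega
      · have hilt : i < n := by omega
        rw [IH i hilt hipos]
        have hn2 : 2 ≤ n := by omega
        have hlog : Nat.log 2 i ≤ Nat.log 2 (n / 2) :=
          Nat.log_mono_right hi2
        have : Nat.log 2 (n / 2) = Nat.log 2 n - 1 := Nat.log_div_base 2 n
        have hlogn : 1 ≤ Nat.log 2 n := Nat.le_log_of_pow_le (by norm_num) (by simpa using hn2)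
        omega
    · intro hv
      rcases Nat.eq_zero_or_pos v with rfl | hvpos
      · exact ⟨0, by rw [hf]; omega, h0⟩
      · refine ⟨2 ^ (v - 1), ?_, ?_⟩
        · have hpow : 2 ^ v ≤ n := by
            calc 2 ^ v ≤ 2 ^ Nat.log 2 n := Nat.pow_le_pow_right (by norm_num) (by omega)
            _ ≤ n := Nat.pow_log_le_self 2 (by omega)
          have : 2 ^ (v - 1) ≤ n / 2 := by
            have h2 : 2 ^ (v - 1) * 2 ≤ n := by
              have : 2 ^ (v - 1) * 2 = 2 ^ v := by
                rw [← pow_succ]; congr 1; omega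
              omega
            omega
          rw [hf]; omega
        · have hipos : 1 ≤ 2 ^ (v - 1) := Nat.one_le_two_pow
          have hilt : 2 ^ (v - 1) < n := by
            have hpow : 2 ^ v ≤ n := by
              calc 2 ^ v ≤ 2 ^ Nat.log 2 n := Nat.pow_le_pow_right (by norm_num) (by omega)
              _ ≤ n := Nat.pow_log_le_self 2 (by omega)
            have : 2 ^ (v - 1) < 2 ^ v := Nat.pow_lt_pow_right (by norm_num) (by omega)
            omega
          rw [IH _ hilt hipos, Nat.log_pow (by norm_num)]
          omega
  rw [hh n, key, mex_Iio]
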